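/- Let T > 0, h ∈ (0,1], γ > 0, δ > 0, C⋆ > 0, p > 0, s > p and 0 < q < s. Let v₁, v₂ be jointly measurable processes on [0,T] with almost surely continuous paths, e := v₁ − v₂, and τ : Ω → [0,T] a random time with {τ < T} ⊆ {sup_{t∈[0,T]}|v₁(t)| ≥ h^{−γ}} ∪ {sup_{t∈[0,T]}|v₂(t)| ≥ h^{−γ}}. Assume E[sup_{t∈[0,T]}|vᵢ(t)|^p] ≤ C⋆ and sup_{t∈[0,T]} E[|vᵢ(t)|^s] ≤ C⋆ for i = 1,2, and E[sup_{t∈[0,τ]}|e(t)|²] ≤ h^{2δ}. Then there is a constant C, depending only on p, q, s and C⋆, such that sup_{t∈[0,T]} E[|e(t)|^q] ≤ C·(h^{(δ − γp/2)·q} + h^{γp·(s−q)/s}). -/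

import Mathlib

open MeasureTheory Set

open scoped ENNReal

private lemma sup_cont_aux {T : ℝ} (hT : 0 ≤ T) {g : ℝ → ℝ}
    (hg : ContinuousOn g (Icc 0 T)) :
    0 ≤ (⨆ t : Icc (0:ℝ) T, |g t.1|) ∧
    BddAbove (Set.range fun t : Icc (0:ℝ) T => |g t.1|) ∧
    ENNReal.ofReal (⨆ t : Icc (0:ℝ) T, |g t.1|)
      = ⨆ r : ℚ, ENNReal.ofReal |g (Set.projIcc 0 T hT (r:ℝ)).1| := by
  haveI : Nonempty (Icc (0:ℝ) T) := ⟨⟨0, left_mem_Icc.2 hT⟩⟩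
  obtain ⟨t₀, ht₀mem, ht₀max⟩ := isCompact_Icc.exists_isMaxOn ⟨0, left_mem_Icc.2 hT⟩ hg.abs
  have hbdd : BddAbove (Set.range fun t : Icc (0:ℝ) T => |g t.1|) := by
    refine ⟨|g t₀|, ?_⟩
    rintro x ⟨t, rfl⟩
    exact ht₀max t.2
  have hX : (⨆ t : Icc (0:ℝ) T, |g t.1|) = |g t₀| := by
    refine le_antisymm (ciSup_le fun t => ht₀max t.2) ?_
    exact le_ciSup hbdd (⟨t₀, ht₀mem⟩ : Icc (0:ℝ) T)
  refine ⟨hX ▸ abs_nonneg _, hbdd, ?_⟩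
  rw [hX]
  refine le_antisymm ?_ (iSup_le fun r => ENNReal.ofReal_le_ofReal (ht₀max (Set.projIcc 0 T hT (r:ℝ)).2))
  -- get a rational sequence tending to t₀
  obtain ⟨x, hx1, hx2⟩ := mem_closure_iff_seq_limit.1 (by
    rw [Rat.denseRange_cast.closure_eq] ; trivial :
      t₀ ∈ closure (Set.range ((↑) : ℚ → ℝ)))
  choose u hu using hx1
  have hxu : ∀ n, ((u n : ℝ)) = x n := hu
  have hwt : Filter.Tendsto (fun n => ((Set.projIcc 0 T hT (x n)):ℝ)) Filter.atTop
      (nhds t₀) := by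
    have hc : Continuous (fun y : ℝ => ((Set.projIcc 0 T hT y):ℝ)) :=
      continuous_subtype_val.comp continuous_projIcc
    have := (hc.tendsto t₀).comp hx2
    simpa [Set.projIcc_of_mem hT ht₀mem, Function.comp_def] using this
  have hwt' : Filter.Tendsto (fun n => ((Set.projIcc 0 T hT (x n)):ℝ)) Filter.atTop
      (nhdsWithin t₀ (Icc 0 T)) :=
    tendsto_nhdsWithin_iff.2 ⟨hwt, Filter.Eventually.of_forall fun n => (Set.projIcc 0 T hT (x n)).2⟩
  have hgt : Filter.Tendsto (fun n => ENNReal.ofReal |g ((Set.projIcc 0 T hT (x n)):ℝ)|)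
      Filter.atTop (nhds (ENNReal.ofReal |g t₀|)) :=
    (ENNReal.continuous_ofReal.tendsto _).comp ((continuous_abs.tendsto _).comp
      ((hg t₀ ht₀mem).tendsto.comp hwt'))
  refine le_of_tendsto hgt (Filter.Eventually.of_forall fun n => ?_)
  calc ENNReal.ofReal |g ((Set.projIcc 0 T hT (x n)):ℝ)|
      = ENNReal.ofReal |g ((Set.projIcc 0 T hT ((u n : ℝ))):ℝ)| := by rw [hxu]
    _ ≤ _ := le_iSup (fun r : ℚ => ENNReal.ofReal |g (Set.projIcc 0 T hT (r:ℝ)).1|) (u n)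

private lemma tail_bound_aux {Ω : Type*} [MeasurableSpace Ω] (μ : Measure Ω)
    {T c p Cs : ℝ} (hT : 0 ≤ T) (hc : 0 < c) (hp : 0 < p) {v : ℝ → Ω → ℝ}
    (hv : Measurable (Function.uncurry v))
    (hcont : ∀ᵐ ω ∂μ, ContinuousOn (fun t => v t ω) (Icc 0 T))
    (hmom : ∫⁻ ω, ENNReal.ofReal ((⨆ t : Icc (0:ℝ) T, |v t.1 ω|) ^ p) ∂μ ≤ ENNReal.ofReal Cs) :
    μ {ω | c ≤ ⨆ t : Icc (0:ℝ) T, |v t.1 ω|} ≤ ENNReal.ofReal (Cs / c ^ p) := by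
  set F : Ω → ℝ≥0∞ := fun ω => ⨆ r : ℚ, ENNReal.ofReal |v (Set.projIcc 0 T hT (r:ℝ)).1 ω| with hF
  have hFm : Measurable F :=
    Measurable.iSup fun r => (hv.of_uncurry_left.abs).ennreal_ofReal
  have hae : ∀ᵐ ω ∂μ, 0 ≤ (⨆ t : Icc (0:ℝ) T, |v t.1 ω|) ∧
      ENNReal.ofReal (⨆ t : Icc (0:ℝ) T, |v t.1 ω|) = F ω := by
    filter_upwards [hcont] with ω hω
    exact ⟨(sup_cont_aux hT hω).1, (sup_cont_aux hT hω).2.2⟩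
  have hsub : ∀ᵐ ω ∂μ, ω ∈ {ω | c ≤ ⨆ t : Icc (0:ℝ) T, |v t.1 ω|} →
      ω ∈ {ω | ENNReal.ofReal (c ^ p) ≤ F ω ^ p} := by
    filter_upwards [hae] with ω hω hcle
    change ENNReal.ofReal (c ^ p) ≤ F ω ^ p
    rw [← hω.2, ← ENNReal.ofReal_rpow_of_nonneg hc.le hp.le]
    exact ENNReal.rpow_le_rpow (ENNReal.ofReal_le_ofReal hcle) hp.le
  have hmark := mul_meas_ge_le_lintegral₀ ((hFm.pow_const p).aemeasurable)
      (ENNReal.ofReal (c ^ p)) (μ := μ)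
  have hint : ∫⁻ ω, F ω ^ p ∂μ ≤ ENNReal.ofReal Cs := by
    refine le_trans (le_of_eq (lintegral_congr_ae ?_)) hmom
    filter_upwards [hae] with ω hω
    rw [← hω.2, ENNReal.ofReal_rpow_of_nonneg hω.1 hp.le]
  have h1 : μ {ω | c ≤ ⨆ t : Icc (0:ℝ) T, |v t.1 ω|}
      ≤ μ {ω | ENNReal.ofReal (c ^ p) ≤ F ω ^ p} := measure_mono_ae hsub
  have hcp : (0:ℝ) < c ^ p := Real.rpow_pos_of_pos hc p
  have h2 : ENNReal.ofReal (c ^ p) * μ {ω | ENNReal.ofReal (c ^ p) ≤ F ω ^ p}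
      ≤ ENNReal.ofReal Cs := le_trans hmark hint
  have h3 : μ {ω | ENNReal.ofReal (c ^ p) ≤ F ω ^ p}
      ≤ ENNReal.ofReal Cs / ENNReal.ofReal (c ^ p) := by
    rw [ENNReal.le_div_iff_mul_le (Or.inl (by simp [hcp])) (Or.inl ENNReal.ofReal_ne_top)]
    rwa [mul_comm]
  refine le_trans h1 (le_trans h3 ?_)
  rw [ENNReal.ofReal_div_of_pos hcp]


/-- Lemma `lem:rate_weak`: under uniform-in-time `p`-th moment bounds of the running suprema,
pointwise-in-time `s`-th moment bounds, and localized squared error bound `h^(2δ)` up to a random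
time `τ` whose failure event is controlled by exceedance of the level `h^(-γ)`, the pointwise
`q`-th moment of the error satisfies
`sup_{t∈[0,T]} E|e(t)|^q ≤ C·(h^((δ-γp/2)q) + h^(γp(s-q)/s))`,
with `C` depending only on `p`, `q`, `s`, `C⋆`. -/
theorem enkf_rate_weak_lemma
    {Ω : Type*} [MeasurableSpace Ω] (μ : Measure Ω) [IsProbabilityMeasure μ]
    (p q s Cs : ℝ) (hp : 0 < p) (hps : p < s) (hq0 : 0 < q) (hqs : q < s) (hCs : 0 < Cs) :
    ∃ C > 0, ∀ T γ δ : ℝ, 0 < T → 0 < γ → 0 < δ →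
      ∀ h ∈ Ioc (0:ℝ) 1, ∀ (v₁ v₂ : ℝ → Ω → ℝ) (τ : Ω → ℝ),
      Measurable (Function.uncurry v₁) → Measurable (Function.uncurry v₂) →
      (∀ᵐ ω ∂μ, ContinuousOn (fun t => v₁ t ω) (Icc 0 T)) →
      (∀ᵐ ω ∂μ, ContinuousOn (fun t => v₂ t ω) (Icc 0 T)) →
      Measurable τ → (∀ ω, τ ω ∈ Icc (0:ℝ) T) →
      ({ω | τ ω < T} ⊆
        {ω | h ^ (-γ) ≤ ⨆ t : Icc (0:ℝ) T, |v₁ t.1 ω|}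
          ∪ {ω | h ^ (-γ) ≤ ⨆ t : Icc (0:ℝ) T, |v₂ t.1 ω|}) →
      (∫⁻ ω, ENNReal.ofReal ((⨆ t : Icc (0:ℝ) T, |v₁ t.1 ω|) ^ p) ∂μ ≤ ENNReal.ofReal Cs) →
      (∫⁻ ω, ENNReal.ofReal ((⨆ t : Icc (0:ℝ) T, |v₂ t.1 ω|) ^ p) ∂μ ≤ ENNReal.ofReal Cs) →
      ((⨆ t : Icc (0:ℝ) T, ∫⁻ ω, ENNReal.ofReal (|v₁ t.1 ω| ^ s) ∂μ) ≤ ENNReal.ofReal Cs) →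
      ((⨆ t : Icc (0:ℝ) T, ∫⁻ ω, ENNReal.ofReal (|v₂ t.1 ω| ^ s) ∂μ) ≤ ENNReal.ofReal Cs) →
      (∫⁻ ω, ENNReal.ofReal ((⨆ t : Icc (0:ℝ) (τ ω), |v₁ t.1 ω - v₂ t.1 ω|) ^ 2) ∂μ
          ≤ ENNReal.ofReal (h ^ (2 * δ))) →
      (⨆ t : Icc (0:ℝ) T, ∫⁻ ω, ENNReal.ofReal (|v₁ t.1 ω - v₂ t.1 ω| ^ q) ∂μ)
        ≤ ENNReal.ofReal (C * (h ^ ((δ - γ * p / 2) * q) + h ^ (γ * p * (s - q) / s))) := by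
  classical
  have hs0 : (0:ℝ) < s := hq0.trans hqs
  have hsq : (0:ℝ) < s - q := sub_pos.2 hqs
  set C2 : ℝ := (2 ^ (s+1) * Cs) ^ (q/s) * (1 + 2*Cs) ^ ((s-q)/s) with hC2def
  have hC2pos : 0 < C2 := by positivity
  refine ⟨1 + C2, by positivity, ?_⟩
  intro T γ δ hT hγ hδ h hh v₁ v₂ τ hv₁ hv₂ hc₁ hc₂ hτm hτmem hτsub hm₁ hm₂ hs₁ hs₂ herr
  obtain ⟨h0, h1⟩ := hh
  set e1 : ℝ := (δ - γ * p / 2) * q with he1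
  set e2 : ℝ := γ * p * (s - q) / s with he2
  -- bound on μ {τ < T}
  have hγc : (0:ℝ) < h ^ (-γ) := Real.rpow_pos_of_pos h0 _
  have hτlt : μ {ω | τ ω < T} ≤ ENNReal.ofReal (2 * (Cs * h ^ (γ*p))) := by
    have hb₁ := tail_bound_aux μ hT.le hγc hp hv₁ hc₁ hm₁
    have hb₂ := tail_bound_aux μ hT.le hγc hp hv₂ hc₂ hm₂
    have hdiv : Cs / (h ^ (-γ)) ^ p = Cs * h ^ (γ*p) := by
      rw [← Real.rpow_mul h0.le, neg_mul, Real.rpow_neg h0.le]; field_simp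
    calc μ {ω | τ ω < T} ≤ μ ({ω | h ^ (-γ) ≤ ⨆ t : Icc (0:ℝ) T, |v₁ t.1 ω|}
          ∪ {ω | h ^ (-γ) ≤ ⨆ t : Icc (0:ℝ) T, |v₂ t.1 ω|}) := measure_mono hτsub
      _ ≤ μ {ω | h ^ (-γ) ≤ ⨆ t : Icc (0:ℝ) T, |v₁ t.1 ω|}
          + μ {ω | h ^ (-γ) ≤ ⨆ t : Icc (0:ℝ) T, |v₂ t.1 ω|} := measure_union_le _ _
      _ ≤ ENNReal.ofReal (Cs / (h ^ (-γ)) ^ p) + ENNReal.ofReal (Cs / (h ^ (-γ)) ^ p) :=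
          add_le_add hb₁ hb₂
      _ = ENNReal.ofReal (2 * (Cs * h ^ (γ*p))) := by
          rw [← ENNReal.ofReal_add (by positivity) (by positivity), hdiv]; ring_nf
  set K : ℝ := h ^ (δ - γ * p / 2) with hKdef
  have hK : 0 < K := Real.rpow_pos_of_pos h0 _
  -- pointwise bound on sth moments of the error
  have herrs : ∀ t : Icc (0:ℝ) T,
      ∫⁻ ω, ENNReal.ofReal (|v₁ t.1 ω - v₂ t.1 ω| ^ s) ∂μ
        ≤ ENNReal.ofReal (2 ^ (s+1) * Cs) := by
    intro t
    have hpt : ∀ ω, ENNReal.ofReal (|v₁ t.1 ω - v₂ t.1 ω| ^ s)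
        ≤ ENNReal.ofReal (2 ^ s) *
          (ENNReal.ofReal (|v₁ t.1 ω| ^ s) + ENNReal.ofReal (|v₂ t.1 ω| ^ s)) := by
      intro ω
      rw [← ENNReal.ofReal_add (by positivity) (by positivity),
        ← ENNReal.ofReal_mul (by positivity)]
      refine ENNReal.ofReal_le_ofReal ?_
      set a := |v₁ t.1 ω|; set b := |v₂ t.1 ω|
      have ha : 0 ≤ a := abs_nonneg _
      have hb : 0 ≤ b := abs_nonneg _
      have h₁ : |v₁ t.1 ω - v₂ t.1 ω| ≤ a + b := abs_sub _ _
      have h₂ : a + b ≤ 2 * max a b := by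
        rcases le_total a b with hab | hab
        · rw [max_eq_right hab]; linarith
        · rw [max_eq_left hab]; linarith
      have h₃ : |v₁ t.1 ω - v₂ t.1 ω| ^ s ≤ (2 * max a b) ^ s :=
        Real.rpow_le_rpow (abs_nonneg _) (h₁.trans h₂) hs0.le
      have h₄ : (2 * max a b) ^ s = 2 ^ s * (max a b) ^ s :=
        Real.mul_rpow (by norm_num) (le_max_of_le_left ha)
      have h₅ : (max a b) ^ s ≤ a ^ s + b ^ s := by
        rcases le_total a b with hab | hab
        · rw [max_eq_right hab]
          nlinarith [Real.rpow_nonneg ha s]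
        · rw [max_eq_left hab]
          nlinarith [Real.rpow_nonneg hb s]
      calc |v₁ t.1 ω - v₂ t.1 ω| ^ s ≤ 2 ^ s * (max a b) ^ s := h₄ ▸ h₃
        _ ≤ 2 ^ s * (a ^ s + b ^ s) := by
            have : (0:ℝ) ≤ 2 ^ s := by positivity
            nlinarith
    calc ∫⁻ ω, ENNReal.ofReal (|v₁ t.1 ω - v₂ t.1 ω| ^ s) ∂μ
        ≤ ∫⁻ ω, ENNReal.ofReal (2 ^ s) *
          (ENNReal.ofReal (|v₁ t.1 ω| ^ s) + ENNReal.ofReal (|v₂ t.1 ω| ^ s)) ∂μ :=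
          lintegral_mono hpt
      _ = ENNReal.ofReal (2 ^ s) * (∫⁻ ω, ENNReal.ofReal (|v₁ t.1 ω| ^ s) ∂μ
          + ∫⁻ ω, ENNReal.ofReal (|v₂ t.1 ω| ^ s) ∂μ) := by
          have hmeas1 : Measurable fun ω => ENNReal.ofReal (|v₁ t.1 ω| ^ s) :=
            (((Real.continuous_rpow_const hs0.le).measurable.comp
              hv₁.of_uncurry_left.abs)).ennreal_ofReal
          have hmeas2 : Measurable fun ω => ENNReal.ofReal (|v₂ t.1 ω| ^ s) :=
            (((Real.continuous_rpow_const hs0.le).measurable.comp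
              hv₂.of_uncurry_left.abs)).ennreal_ofReal
          rw [lintegral_const_mul' _ _ ENNReal.ofReal_ne_top, lintegral_add_left hmeas1]
      _ ≤ ENNReal.ofReal (2 ^ s) * (ENNReal.ofReal Cs + ENNReal.ofReal Cs) := by
          gcongr
          · exact le_trans (le_iSup (fun t' : Icc (0:ℝ) T =>
              ∫⁻ ω, ENNReal.ofReal (|v₁ t'.1 ω| ^ s) ∂μ) t) hs₁
          · exact le_trans (le_iSup (fun t' : Icc (0:ℝ) T =>
              ∫⁻ ω, ENNReal.ofReal (|v₂ t'.1 ω| ^ s) ∂μ) t) hs₂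
      _ = ENNReal.ofReal (2 ^ (s+1) * Cs) := by
          rw [← ENNReal.ofReal_add hCs.le hCs.le, ← ENNReal.ofReal_mul (by positivity),
            Real.rpow_add_one (by norm_num : (2:ℝ) ≠ 0)]
          ring_nf
  refine iSup_le fun t => ?_
  set Y : Ω → ℝ := fun ω => |v₁ t.1 ω - v₂ t.1 ω| with hYdef
  have hYm : Measurable Y := (hv₁.of_uncurry_left.sub hv₂.of_uncurry_left).abs
  have hY0 : ∀ ω, 0 ≤ Y ω := fun ω => abs_nonneg _
  set A : Set Ω := {ω | K < Y ω} with hAdef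
  have hA : MeasurableSet A := measurableSet_lt measurable_const hYm
  set S : Set Ω := A ∩ {ω | T ≤ τ ω} with hSdef
  have hS : MeasurableSet S := hA.inter (measurableSet_le measurable_const hτm)
  -- bound μ S via the localized error estimate
  have hμS : μ S ≤ ENNReal.ofReal (h ^ (γ*p)) := by
    have hK2 : K ^ (2:ℕ) = h ^ (2*δ - γ*p) := by
      rw [hKdef, ← Real.rpow_natCast (h ^ (δ - γ*p/2)) 2, ← Real.rpow_mul h0.le]
      norm_num; ring_nf
    have key : ∀ᵐ ω ∂μ, ω ∈ S → ENNReal.ofReal (K ^ (2:ℕ))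
        ≤ ENNReal.ofReal ((⨆ t' : Icc (0:ℝ) (τ ω), |v₁ t'.1 ω - v₂ t'.1 ω|) ^ (2:ℕ)) := by
      filter_upwards [hc₁, hc₂] with ω hω₁ hω₂ hωS
      obtain ⟨hωA, hωτ⟩ := hωS
      have hτT : τ ω = T := le_antisymm (hτmem ω).2 hωτ
      have htmem : t.1 ∈ Icc (0:ℝ) (τ ω) := by rw [hτT]; exact t.2
      have hbdd : BddAbove (Set.range fun t' : Icc (0:ℝ) (τ ω) => |v₁ t'.1 ω - v₂ t'.1 ω|) := by
        have hcont : ContinuousOn (fun x : ℝ => |v₁ x ω - v₂ x ω|) (Icc 0 (τ ω)) := by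
          rw [hτT]; exact (hω₁.sub hω₂).abs
        haveI : Nonempty (Icc (0:ℝ) (τ ω)) := ⟨⟨0, left_mem_Icc.2 (hτmem ω).1⟩⟩
        obtain ⟨t₀, ht₀mem, ht₀max⟩ := isCompact_Icc.exists_isMaxOn
          ⟨0, left_mem_Icc.2 (hτmem ω).1⟩ hcont
        refine ⟨|v₁ t₀ ω - v₂ t₀ ω|, ?_⟩
        rintro x ⟨t', rfl⟩
        exact ht₀max t'.2
      have hYle : Y ω ≤ ⨆ t' : Icc (0:ℝ) (τ ω), |v₁ t'.1 ω - v₂ t'.1 ω| :=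
        le_ciSup hbdd (⟨t.1, htmem⟩ : Icc (0:ℝ) (τ ω))
      have hKle : K ≤ ⨆ t' : Icc (0:ℝ) (τ ω), |v₁ t'.1 ω - v₂ t'.1 ω| :=
        le_trans (le_of_lt hωA) hYle
      exact ENNReal.ofReal_le_ofReal (pow_le_pow_left₀ hK.le hKle 2)
    have hstep : ENNReal.ofReal (K ^ (2:ℕ)) * μ S ≤ ENNReal.ofReal (h ^ (2*δ)) := by
      calc ENNReal.ofReal (K ^ (2:ℕ)) * μ S
          = ∫⁻ _ω in S, ENNReal.ofReal (K ^ (2:ℕ)) ∂μ := (setLIntegral_const S _).symm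
        _ ≤ ∫⁻ ω in S, ENNReal.ofReal
            ((⨆ t' : Icc (0:ℝ) (τ ω), |v₁ t'.1 ω - v₂ t'.1 ω|) ^ (2:ℕ)) ∂μ :=
            lintegral_mono_ae ((ae_restrict_iff' hS).2 key)
        _ ≤ ∫⁻ ω, ENNReal.ofReal
            ((⨆ t' : Icc (0:ℝ) (τ ω), |v₁ t'.1 ω - v₂ t'.1 ω|) ^ (2:ℕ)) ∂μ :=
            setLIntegral_le_lintegral _ _
        _ ≤ ENNReal.ofReal (h ^ (2*δ)) := herr
    have hK2pos : (0:ℝ) < K ^ (2:ℕ) := by positivity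
    have hne0 : ENNReal.ofReal (K ^ (2:ℕ)) ≠ 0 := (ENNReal.ofReal_pos.2 hK2pos).ne'
    have hdiv : μ S ≤ ENNReal.ofReal (h ^ (2*δ)) / ENNReal.ofReal (K ^ (2:ℕ)) := by
      rw [ENNReal.le_div_iff_mul_le (Or.inl hne0) (Or.inl ENNReal.ofReal_ne_top)]
      rwa [mul_comm]
    refine le_trans hdiv ?_
    rw [← ENNReal.ofReal_div_of_pos hK2pos, hK2]
    refine le_of_eq (congrArg _ ?_)
    rw [← Real.rpow_sub h0]; ring_nf
  -- bound μ A
  have hμA : μ A ≤ ENNReal.ofReal ((1 + 2*Cs) * h ^ (γ*p)) := by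
    have hsub : A ⊆ S ∪ {ω | τ ω < T} := by
      intro ω hω
      rcases le_or_gt T (τ ω) with hcase | hcase
      · exact Or.inl ⟨hω, hcase⟩
      · exact Or.inr hcase
    calc μ A ≤ μ (S ∪ {ω | τ ω < T}) := measure_mono hsub
      _ ≤ μ S + μ {ω | τ ω < T} := measure_union_le _ _
      _ ≤ ENNReal.ofReal (h ^ (γ*p)) + ENNReal.ofReal (2 * (Cs * h ^ (γ*p))) :=
          add_le_add hμS hτlt
      _ = ENNReal.ofReal ((1 + 2*Cs) * h ^ (γ*p)) := by
          rw [← ENNReal.ofReal_add (by positivity) (by positivity)]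
          ring_nf
  -- split the q-th moment integral
  have hsplit : ∫⁻ ω, ENNReal.ofReal (Y ω ^ q) ∂μ
      = ∫⁻ ω in A, ENNReal.ofReal (Y ω ^ q) ∂μ + ∫⁻ ω in Aᶜ, ENNReal.ofReal (Y ω ^ q) ∂μ :=
    (lintegral_add_compl _ hA).symm
  -- part on Aᶜ
  have hpart2 : ∫⁻ ω in Aᶜ, ENNReal.ofReal (Y ω ^ q) ∂μ ≤ ENNReal.ofReal (h ^ e1) := by
    have hKq : K ^ q = h ^ e1 := by rw [hKdef, he1, Real.rpow_mul h0.le]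
    calc ∫⁻ ω in Aᶜ, ENNReal.ofReal (Y ω ^ q) ∂μ
        ≤ ∫⁻ _ω in Aᶜ, ENNReal.ofReal (K ^ q) ∂μ := by
          refine lintegral_mono_ae ((ae_restrict_iff' hA.compl).2 ?_)
          refine Filter.Eventually.of_forall fun ω hω => ?_
          have : Y ω ≤ K := not_lt.1 hω
          exact ENNReal.ofReal_le_ofReal (Real.rpow_le_rpow (hY0 ω) this hq0.le)
      _ = ENNReal.ofReal (K ^ q) * μ Aᶜ := setLIntegral_const _ _
      _ ≤ ENNReal.ofReal (K ^ q) * 1 := by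
          gcongr
          exact prob_le_one
      _ = ENNReal.ofReal (h ^ e1) := by rw [mul_one, hKq]
  -- part on A via Hölder
  have hpart1 : ∫⁻ ω in A, ENNReal.ofReal (Y ω ^ q) ∂μ ≤ ENNReal.ofReal (C2 * h ^ e2) := by
    have hconj : (s/q).HolderConjugate (s/(s-q)) := by
      refine Real.holderConjugate_iff.mpr ⟨?_, ?_⟩
      · rw [lt_div_iff₀ hq0]; linarith
      · rw [inv_div, inv_div]; field_simp; ring
    have hYsm : ∀ ω, (ENNReal.ofReal (Y ω ^ q)) ^ (s/q) = ENNReal.ofReal (Y ω ^ s) := by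
      intro ω
      rw [ENNReal.ofReal_rpow_of_nonneg (by positivity) (by positivity),
        ← Real.rpow_mul (hY0 ω), mul_comm, div_mul_cancel₀ s hq0.ne']
    have hH := ENNReal.lintegral_mul_le_Lp_mul_Lq (μ.restrict A) hconj
      (((((Real.continuous_rpow_const hq0.le).measurable.comp hYm)).ennreal_ofReal).aemeasurable)
      (aemeasurable_const (b := (1:ℝ≥0∞)))
    simp only [Pi.mul_apply, Pi.one_apply, mul_one, ENNReal.one_rpow, lintegral_one,
      Measure.restrict_apply_univ, one_div_div] at hH
    have hH' : ∫⁻ ω in A, ENNReal.ofReal (Y ω ^ q) ∂μ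
        ≤ (∫⁻ ω in A, ENNReal.ofReal (Y ω ^ s) ∂μ) ^ (q/s) * (μ A) ^ ((s-q)/s) := by
      calc ∫⁻ ω in A, ENNReal.ofReal (Y ω ^ q) ∂μ
          ≤ (∫⁻ ω in A, (ENNReal.ofReal (Y ω ^ q)) ^ (s/q) ∂μ) ^ (q/s)
            * (μ A) ^ ((s-q)/s) := hH
        _ = (∫⁻ ω in A, ENNReal.ofReal (Y ω ^ s) ∂μ) ^ (q/s) * (μ A) ^ ((s-q)/s) := by
            rw [lintegral_congr fun ω => hYsm ω]
    have hbound1 : ∫⁻ ω in A, ENNReal.ofReal (Y ω ^ s) ∂μ ≤ ENNReal.ofReal (2 ^ (s+1) * Cs) :=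
      le_trans (setLIntegral_le_lintegral _ _) (herrs t)
    calc ∫⁻ ω in A, ENNReal.ofReal (Y ω ^ q) ∂μ
        ≤ (ENNReal.ofReal (2 ^ (s+1) * Cs)) ^ (q/s)
          * (ENNReal.ofReal ((1 + 2*Cs) * h ^ (γ*p))) ^ ((s-q)/s) := by
          refine le_trans hH' ?_
          exact mul_le_mul' (ENNReal.rpow_le_rpow hbound1 (by positivity))
            (ENNReal.rpow_le_rpow hμA (by positivity))
      _ = ENNReal.ofReal (C2 * h ^ e2) := by
          rw [ENNReal.ofReal_rpow_of_nonneg (by positivity) (by positivity),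
            ENNReal.ofReal_rpow_of_nonneg (by positivity) (by positivity),
            ← ENNReal.ofReal_mul (by positivity)]
          congr 1
          have hreal : ((1 + 2*Cs) * h ^ (γ*p)) ^ ((s-q)/s)
              = (1 + 2*Cs) ^ ((s-q)/s) * h ^ e2 := by
            rw [Real.mul_rpow (by positivity) (by positivity), ← Real.rpow_mul h0.le]
            have harith : γ*p*((s-q)/s) = e2 := by rw [he2]; ring
            rw [harith]
          rw [hreal, hC2def]
          ring
  calc ∫⁻ ω, ENNReal.ofReal (Y ω ^ q) ∂μ
      = ∫⁻ ω in A, ENNReal.ofReal (Y ω ^ q) ∂μ + ∫⁻ ω in Aᶜ, ENNReal.ofReal (Y ω ^ q) ∂μ :=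
      hsplit
    _ ≤ ENNReal.ofReal (C2 * h ^ e2) + ENNReal.ofReal (h ^ e1) := add_le_add hpart1 hpart2
    _ = ENNReal.ofReal (C2 * h ^ e2 + h ^ e1) := by
        rw [← ENNReal.ofReal_add (by positivity) (by positivity)]
    _ ≤ ENNReal.ofReal ((1 + C2) * (h ^ e1 + h ^ e2)) := by
        refine ENNReal.ofReal_le_ofReal ?_
        have hx : (0:ℝ) ≤ h ^ e1 := by positivity
        have hy : (0:ℝ) ≤ h ^ e2 := by positivity
        nlinarith
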